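/- Let x ≥ 0, let n⃗ = (n_0,…,n_x) be positive integers, let T⃗_x be a system of trees that is (2n_0−1,…,2n_x−1)-good from a tuple of strings σ⃗_x, and let P be a set of elements of T⃗_x. Then there is a system of trees, each of whose elements is an element of T⃗_x, which is n⃗-good from σ⃗_x for P, or there is such a system which is n⃗-good from σ⃗_x for the complement of P. -/
import Mathlib


/-- A *tree*: a finite set of pairwise incomparable strings (antichain under
the prefix/extension order), where a string is a finite sequence of naturals. -/
def IsTree (T : Finset (List ℕ)) : Prop :=
  ∀ σ ∈ T, ∀ τ ∈ T, σ <+: τ → σ = τ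

/-- `T` is `a`-good from `σ`: `T` is nonempty, every string in `T` extends `σ`,
and for every `τ` with `σ ⊆ τ ⊊ ρ` for some `ρ ∈ T`, at least `a` immediate
successors `τ*k` of `τ` are initial segments of elements of `T`. -/
def GoodFrom (a : ℕ) (T : Finset (List ℕ)) (σ : List ℕ) : Prop :=
  T.Nonempty ∧ (∀ ρ ∈ T, σ <+: ρ) ∧
    ∀ τ : List ℕ, (∃ ρ ∈ T, σ <+: τ ∧ τ <+: ρ ∧ τ ≠ ρ) →
      a ≤ {k : ℕ | ∃ ρ ∈ T, τ ++ [k] <+: ρ}.ncard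

/-- `T` is `a`-good from `σ` for `P`: in addition `T ⊆ P`. -/
def GoodFromFor (a : ℕ) (T : Finset (List ℕ)) (σ : List ℕ) (P : Set (List ℕ)) : Prop :=
  GoodFrom a T σ ∧ ↑T ⊆ P

/-- A *system of trees* `T⃗ = (T_0, …, T_x)`: a tree `T_0` together with,
recursively, for each tuple `(σ_0, …, σ_{k-1})`, a tree `T_k(σ_0, …, σ_{k-1})`;
formally, the tree at level `k` is a function of the strings at the levels `< k`. -/
def TreeSystem (x : ℕ) : Type :=
  (k : Fin (x + 1)) → ((j : Fin (k : ℕ)) → List ℕ) → Finset (List ℕ)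

/-- Restriction of a tuple of strings to the coordinates below `k`. -/
def restrictBelow {x : ℕ} (k : Fin (x + 1)) (β : Fin (x + 1) → List ℕ) :
    (j : Fin (k : ℕ)) → List ℕ :=
  fun j => β ⟨j, j.isLt.trans k.isLt⟩

/-- Every level of the system is a tree (finite antichain). -/
def IsTreeSystem {x : ℕ} (T : TreeSystem x) : Prop :=
  ∀ k ρ, IsTree (T k ρ)

/-- `β` is an element of the subsystem `(T_0, …, T_{K-1})`:
`β k ∈ T_k(β_0, …, β_{k-1})` for all `k < K`. -/
def SysMemUpTo {x : ℕ} (T : TreeSystem x) (K : Fin (x + 1))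
    (β : Fin (x + 1) → List ℕ) : Prop :=
  ∀ k, k < K → β k ∈ T k (restrictBelow k β)

/-- `β` is an element of the system `T⃗`: `β k ∈ T_k(β_0, …, β_{k-1})` for all `k`. -/
def SysElem {x : ℕ} (T : TreeSystem x) (β : Fin (x + 1) → List ℕ) : Prop :=
  ∀ k, β k ∈ T k (restrictBelow k β)

/-- The subsystem `(T_0, …, T_{K-1})` is `(n_0, …, n_{K-1})`-good from `σ⃗`. -/
def SysGoodBelow {x : ℕ} (n : Fin (x + 1) → ℕ) (T : TreeSystem x)
    (σ : Fin (x + 1) → List ℕ) (K : Fin (x + 1)) : Prop :=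
  ∀ k, k < K → ∀ β, SysMemUpTo T k β →
    GoodFrom (n k) (T k (restrictBelow k β)) (σ k)

/-- The system `T⃗` is `n⃗`-good from `σ⃗`: for each `k` and each element
`β⃗_{k-1}` of the subsystem `(T_0, …, T_{k-1})`, the tree `T_k(β⃗_{k-1})`
is `n_k`-good from `σ_k`. -/
def SysGoodFrom {x : ℕ} (n : Fin (x + 1) → ℕ) (T : TreeSystem x)
    (σ : Fin (x + 1) → List ℕ) : Prop :=
  ∀ k β, SysMemUpTo T k β → GoodFrom (n k) (T k (restrictBelow k β)) (σ k)

/-- The system `T⃗` is `n⃗`-good from `σ⃗` for `P`: in addition every element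
of the system belongs to `P`. -/
def SysGoodFromFor {x : ℕ} (n : Fin (x + 1) → ℕ) (T : TreeSystem x)
    (σ : Fin (x + 1) → List ℕ) (P : Set (Fin (x + 1) → List ℕ)) : Prop :=
  SysGoodFrom n T σ ∧ ∀ β, SysElem T β → β ∈ P

/-- `ξ⃗` componentwise extends `β⃗`. -/
def TupleExtends {x : ℕ} (β ξ : Fin (x + 1) → List ℕ) : Prop :=
  ∀ k, β k <+: ξ k

/-- A set of tuples of strings is *open* if it is closed under componentwise
extension. -/
def IsOpenTupleSet {x : ℕ} (P : Set (Fin (x + 1) → List ℕ)) : Prop :=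
  ∀ β ∈ P, ∀ ξ, TupleExtends β ξ → ξ ∈ P

-- helpers
lemma proper_prefix_length {σ ρ : List ℕ} (h : σ <+: ρ) (hne : σ ≠ ρ) :
    σ.length < ρ.length := by
  rcases Nat.lt_or_ge σ.length ρ.length with h1 | h1
  · exact h1
  · exact absurd (h.eq_of_length (le_antisymm h.length_le h1)) hne

lemma prefix_antisymm {σ ρ : List ℕ} (h1 : σ <+: ρ) (h2 : ρ <+: σ) : σ = ρ :=
  h1.eq_of_length (le_antisymm h1.length_le h2.length_le)

lemma exists_snoc_prefix {σ τ : List ℕ} (h : σ <+: τ) (hne : σ ≠ τ) :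
    ∃ k, σ ++ [k] <+: τ := by
  obtain ⟨r, rfl⟩ := h
  cases r with
  | nil => simp at hne
  | cons k r => exact ⟨k, r, by simp⟩

lemma succ_set_finite (S : Finset (List ℕ)) (τ : List ℕ) :
    {k : ℕ | ∃ ρ ∈ S, τ ++ [k] <+: ρ}.Finite := by
  apply Set.Finite.subset (S.finite_toSet.image (fun ρ => ρ.getD τ.length 0))
  rintro k ⟨ρ, hρ, r, rfl⟩
  refine ⟨τ ++ [k] ++ r, hρ, ?_⟩
  rw [List.append_assoc]
  show (τ ++ ([k] ++ r)).getD τ.length 0 = k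
  have := List.getD_append_right (l := τ) (l' := [k] ++ r) (d := 0) (n := τ.length) (Nat.le_refl _)
  rw [this]; simp

lemma goodFrom_singleton (n : ℕ) (σ : List ℕ) : GoodFrom n {σ} σ := by
  refine ⟨⟨σ, Finset.mem_singleton_self σ⟩, ?_, ?_⟩
  · intro ρ hρ; rw [Finset.mem_singleton] at hρ; subst hρ; exact List.prefix_refl _
  · rintro τ ⟨ρ, hρ, h1, h2, h3⟩
    rw [Finset.mem_singleton] at hρ; subst hρ
    exact absurd (prefix_antisymm h2 h1) h3

lemma treeColor (m : ℕ) : ∀ (n : ℕ), 1 ≤ n → ∀ (T : Finset (List ℕ)), IsTree T →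
    ∀ (σ : List ℕ), (∀ ρ ∈ T, ρ.length ≤ m + σ.length) →
    GoodFrom (2 * n - 1) T σ → ∀ c : List ℕ → Bool,
    ∃ S b, S ⊆ T ∧ GoodFrom n S σ ∧ ∀ ρ ∈ S, c ρ = b := by
  induction m with
  | zero =>
    intro n hn T hT σ hlen hg c
    obtain ⟨⟨ρ0, hρ0⟩, hpre, _⟩ := hg
    have hσ : σ ∈ T := by
      have h1 := hpre ρ0 hρ0
      have h2 := hlen ρ0 hρ0
      have : σ = ρ0 := h1.eq_of_length (le_antisymm h1.length_le (by omega))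
      subst this; exact hρ0
    have hTσ : T = {σ} := by
      ext ρ; simp only [Finset.mem_singleton]
      constructor
      · intro hρ; exact (hT σ hσ ρ hρ (hpre ρ hρ)).symm
      · rintro rfl; exact hσ
    exact ⟨{σ}, c σ, by rw [hTσ], goodFrom_singleton n σ,
      by intro ρ hρ; rw [Finset.mem_singleton] at hρ; subst hρ; rfl⟩
  | succ m ih =>
    intro n hn T hT σ hlen hg c
    classical
    by_cases hσ : σ ∈ T
    · obtain ⟨_, hpre, _⟩ := hg
      have hTσ : T = {σ} := by
        ext ρ; simp only [Finset.mem_singleton]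
        constructor
        · intro hρ; exact (hT σ hσ ρ hρ (hpre ρ hρ)).symm
        · rintro rfl; exact hσ
      exact ⟨{σ}, c σ, by rw [hTσ], goodFrom_singleton n σ,
        by intro ρ hρ; rw [Finset.mem_singleton] at hρ; subst hρ; rfl⟩
    · obtain ⟨⟨ρ0, hρ0⟩, hpre, hbr⟩ := hg
      set K : Set ℕ := {k : ℕ | ∃ ρ ∈ T, σ ++ [k] <+: ρ} with hK
      have hKfin : K.Finite := succ_set_finite T σ
      have hKcard : 2 * n - 1 ≤ K.ncard := by
        apply hbr σ
        exact ⟨ρ0, hρ0, List.prefix_refl σ, hpre ρ0 hρ0, fun h => hσ (h ▸ hρ0)⟩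
      -- for each k ∈ K, the branch tree
      set Tk : ℕ → Finset (List ℕ) := fun k => T.filter (fun ρ => σ ++ [k] <+: ρ) with hTk
      have hTksub : ∀ k, Tk k ⊆ T := fun k => Finset.filter_subset _ _
      have key : ∀ k ∈ K, ∃ S b, S ⊆ Tk k ∧ GoodFrom n S (σ ++ [k]) ∧ ∀ ρ ∈ S, c ρ = b := by
        intro k hk
        apply ih n hn (Tk k)
        · intro a ha b hb hab
          exact hT a (hTksub k ha) b (hTksub k hb) hab
        · intro ρ hρ
          have := hlen ρ (hTksub k hρ)
          simp only [List.length_append, List.length_cons, List.length_nil]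
          omega
        · obtain ⟨ρ1, hρ1T, hρ1p⟩ := hk
          refine ⟨⟨ρ1, Finset.mem_filter.2 ⟨hρ1T, hρ1p⟩⟩, ?_, ?_⟩
          · intro ρ hρ; exact (Finset.mem_filter.1 hρ).2
          · rintro τ ⟨ρ, hρ, h1, h2, h3⟩
            have hρT := (Finset.mem_filter.1 hρ).1
            have hσk : σ ++ [k] <+: τ := h1
            have hστ : σ <+: τ := (List.prefix_append σ [k]).trans h1
            have hset : {j : ℕ | ∃ ρ' ∈ T, τ ++ [j] <+: ρ'}
                = {j : ℕ | ∃ ρ' ∈ Tk k, τ ++ [j] <+: ρ'} := by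
              ext j; simp only [Set.mem_setOf_eq]
              constructor
              · rintro ⟨ρ', hρ', hp⟩
                refine ⟨ρ', Finset.mem_filter.2 ⟨hρ', ?_⟩, hp⟩
                exact hσk.trans ((List.prefix_append τ [j]).trans hp)
              · rintro ⟨ρ', hρ', hp⟩
                exact ⟨ρ', (Finset.mem_filter.1 hρ').1, hp⟩
            rw [← hset]
            exact hbr τ ⟨ρ, hρT, hστ, h2, h3⟩
      choose! S' b' hS'sub hS'good hS'col using key
      -- pigeonhole
      set KF : Finset ℕ := hKfin.toFinset with hKF
      have hKFcard : 2 * n - 1 ≤ KF.card := by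
        rwa [Set.ncard_eq_toFinset_card _ hKfin] at hKcard
      have hsplit := Finset.card_filter_add_card_filter_not
        (s := KF) (p := fun k => b' k = true)
      obtain ⟨bb, hF⟩ : ∃ bb : Bool, n ≤ (KF.filter fun k => b' k = bb).card := by
        by_cases h : n ≤ (KF.filter fun k => b' k = true).card
        · exact ⟨true, h⟩
        · refine ⟨false, ?_⟩
          have heq : (KF.filter fun k => ¬ b' k = true) = (KF.filter fun k => b' k = false) := by
            apply Finset.filter_congr; intro k _; simp
          rw [heq] at hsplit
          omega
      set F : Finset ℕ := KF.filter (fun k => b' k = bb) with hFdef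
      have hFK : ∀ k ∈ F, k ∈ K := by
        intro k hk
        exact hKfin.mem_toFinset.1 (Finset.mem_filter.1 hk).1
      refine ⟨F.biUnion S', bb, ?_, ⟨?_, ?_, ?_⟩, ?_⟩
      · intro ρ hρ
        obtain ⟨k, hk, hρ⟩ := Finset.mem_biUnion.1 hρ
        exact hTksub k (hS'sub k (hFK k hk) hρ)
      · -- nonempty
        have hFne : F.Nonempty := Finset.card_pos.1 (by omega)
        obtain ⟨k, hk⟩ := hFne
        obtain ⟨ρ, hρ⟩ := (hS'good k (hFK k hk)).1
        exact ⟨ρ, Finset.mem_biUnion.2 ⟨k, hk, hρ⟩⟩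
      · -- prefixes
        intro ρ hρ
        obtain ⟨k, hk, hρ⟩ := Finset.mem_biUnion.1 hρ
        exact (List.prefix_append σ [k]).trans ((hS'good k (hFK k hk)).2.1 ρ hρ)
      · -- branching
        rintro τ ⟨ρ, hρ, h1, h2, h3⟩
        obtain ⟨k, hk, hρk⟩ := Finset.mem_biUnion.1 hρ
        by_cases hτσ : τ = σ
        · subst hτσ
          have hsub : (↑F : Set ℕ) ⊆ {j : ℕ | ∃ ρ' ∈ F.biUnion S', τ ++ [j] <+: ρ'} := by
            intro j hj
            have hjF : j ∈ F := hj
            obtain ⟨ρ', hρ'⟩ := (hS'good j (hFK j hjF)).1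
            exact ⟨ρ', Finset.mem_biUnion.2 ⟨j, hjF, hρ'⟩, (hS'good j (hFK j hjF)).2.1 ρ' hρ'⟩
          calc n ≤ F.card := hF
            _ = (↑F : Set ℕ).ncard := (Set.ncard_coe_finset F).symm
            _ ≤ _ := Set.ncard_le_ncard hsub (succ_set_finite _ τ)
        · -- σ ++ [k] <+: τ
          have hkρ : σ ++ [k] <+: ρ := (hS'good k (hFK k hk)).2.1 ρ hρk
          have hlt : σ.length < τ.length := proper_prefix_length h1 (fun h => hτσ h.symm)
          have hkτ : σ ++ [k] <+: τ := by
            apply List.prefix_of_prefix_length_le hkρ h2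
            simp only [List.length_append, List.length_cons, List.length_nil]
            omega
          have := (hS'good k (hFK k hk)).2.2 τ ⟨ρ, hρk, hkτ, h2, h3⟩
          refine le_trans this (Set.ncard_le_ncard ?_ (succ_set_finite _ τ))
          rintro j ⟨ρ', hρ', hp⟩
          exact ⟨ρ', Finset.mem_biUnion.2 ⟨k, hk, hρ'⟩, hp⟩
      · -- colors
        intro ρ hρ
        obtain ⟨k, hk, hρ⟩ := Finset.mem_biUnion.1 hρ
        rw [hS'col k (hFK k hk) ρ hρ]
        exact (Finset.mem_filter.1 hk).2

-- cons of a string onto a tuple (val-level match so it plays well with `Fin.mk`)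
def consT {m : ℕ} (ρ : List ℕ) (κ : Fin m → List ℕ) : Fin (m + 1) → List ℕ
  | ⟨0, _⟩ => ρ
  | ⟨i + 1, h⟩ => κ ⟨i, Nat.lt_of_succ_lt_succ h⟩

-- tail of a tuple / of an indexed family
def tpl {x : ℕ} {α : Sort*} (f : Fin (x + 2) → α) : Fin (x + 1) → α :=
  fun i => f ⟨(i : ℕ) + 1, Nat.succ_lt_succ i.isLt⟩

def tailSys {x : ℕ} (T : TreeSystem (x + 1)) (ρ : List ℕ) : TreeSystem x :=
  fun k κ => T ⟨(k : ℕ) + 1, Nat.succ_lt_succ k.isLt⟩ (consT ρ κ)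

lemma restrict_consT {x : ℕ} (ρ : List ℕ) (γ : Fin (x + 1) → List ℕ) (k : Fin (x + 1)) :
    restrictBelow (⟨(k : ℕ) + 1, Nat.succ_lt_succ k.isLt⟩ : Fin (x + 2)) (consT ρ γ)
      = consT ρ (restrictBelow k γ) := by
  funext i
  rcases i with ⟨(_ | s), hi⟩ <;> rfl

def buildSys {x : ℕ} {T0 : Finset (List ℕ)} (S₀ : Finset (List ℕ))
    (S' : (ρ : List ℕ) → ρ ∈ T0 → TreeSystem x) : TreeSystem (x + 1) := fun k =>
  match k with
  | ⟨0, _⟩ => fun _ => S₀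
  | ⟨j + 1, hk⟩ => fun κ =>
      if h : κ ⟨0, Nat.succ_pos j⟩ ∈ T0
      then S' (κ ⟨0, Nat.succ_pos j⟩) h ⟨j, Nat.lt_of_succ_lt_succ hk⟩
             (fun i => κ ⟨(i : ℕ) + 1, Nat.succ_lt_succ i.isLt⟩)
      else ∅

lemma buildSys_succ {x : ℕ} {T0 : Finset (List ℕ)} (S₀ : Finset (List ℕ))
    (S' : (ρ : List ℕ) → ρ ∈ T0 → TreeSystem x) (j : ℕ) (hk : j + 1 < x + 2)
    (κ : Fin (j + 1) → List ℕ) (h : κ ⟨0, Nat.succ_pos j⟩ ∈ T0) :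
    buildSys S₀ S' ⟨j + 1, hk⟩ κ
      = S' (κ ⟨0, Nat.succ_pos j⟩) h ⟨j, Nat.lt_of_succ_lt_succ hk⟩
          (fun i => κ ⟨(i : ℕ) + 1, Nat.succ_lt_succ i.isLt⟩) :=
  dif_pos h

lemma buildSys_succ_neg {x : ℕ} {T0 : Finset (List ℕ)} (S₀ : Finset (List ℕ))
    (S' : (ρ : List ℕ) → ρ ∈ T0 → TreeSystem x) (j : ℕ) (hk : j + 1 < x + 2)
    (κ : Fin (j + 1) → List ℕ) (h : κ ⟨0, Nat.succ_pos j⟩ ∉ T0) :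
    buildSys S₀ S' ⟨j + 1, hk⟩ κ = ∅ :=
  dif_neg h

theorem auxMain : ∀ (x : ℕ) (n : Fin (x + 1) → ℕ), (∀ i, 1 ≤ n i) →
    ∀ (T : TreeSystem x), IsTreeSystem T → ∀ (σ : Fin (x + 1) → List ℕ),
    SysGoodFrom (fun i => 2 * n i - 1) T σ → ∀ (P : Set (Fin (x + 1) → List ℕ)),
    ∃ S : TreeSystem x, (∀ k κ, S k κ ⊆ T k κ) ∧
      (SysGoodFromFor n S σ P ∨ SysGoodFromFor n S σ Pᶜ) := by
  intro x
  induction x with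
  | zero =>
    intro n hn T hT σ hgood P
    classical
    have h0 : (0 : ℕ) < 1 := Nat.one_pos
    have hT0eq : ∀ (h : (0:ℕ) < 1) (κ : Fin 0 → List ℕ),
        T ⟨0, h⟩ κ = T ⟨0, h0⟩ (fun i => i.elim0) :=
      fun h κ => congrArg _ (funext fun i => i.elim0)
    have hg0 : GoodFrom (2 * n ⟨0, h0⟩ - 1) (T ⟨0, h0⟩ (fun i => i.elim0)) (σ ⟨0, h0⟩) := by
      have hv : SysMemUpTo T ⟨0, h0⟩ (fun _ => []) := by
        intro k hk
        exact absurd hk (by simp [Fin.lt_def])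
      have := hgood ⟨0, h0⟩ (fun _ => []) hv
      rwa [hT0eq h0 _] at this
    obtain ⟨S₀, b, hsub₀, hS₀good, hS₀col⟩ :=
      treeColor ((T ⟨0, h0⟩ (fun i => i.elim0)).sup List.length) (n ⟨0, h0⟩) (hn _)
        (T ⟨0, h0⟩ (fun i => i.elim0)) (hT _ _) (σ ⟨0, h0⟩)
        (fun ρ hρ => le_trans (Finset.le_sup (f := List.length) hρ) (Nat.le_add_right _ _)) hg0
        (fun ρ => decide ((fun _ : Fin 1 => ρ) ∈ P))
    have helem : ∀ β : Fin 1 → List ℕ, SysElem (fun _ _ => S₀) β →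
        (fun _ : Fin 1 => β ⟨0, h0⟩) = β ∧ β ⟨0, h0⟩ ∈ S₀ := by
      intro β hβ
      constructor
      · funext j
        rcases j with ⟨(_ | jv), hj⟩
        · rfl
        · omega
      · exact hβ ⟨0, h0⟩
    have hgoodS : SysGoodFrom n (fun _ _ => S₀) σ := by
      intro k β _
      rcases k with ⟨(_ | kv), hk⟩
      · exact hS₀good
      · omega
    refine ⟨fun _ _ => S₀, ?_, ?_⟩
    · intro k κ
      rcases k with ⟨(_ | kv), hk⟩
      · rw [hT0eq hk κ]
        exact hsub₀
      · omega
    · cases b with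
      | true =>
        left
        refine ⟨hgoodS, ?_⟩
        intro β hβ
        obtain ⟨heq, hmem⟩ := helem β hβ
        have hc := hS₀col _ hmem
        have := of_decide_eq_true hc
        rwa [heq] at this
      | false =>
        right
        refine ⟨hgoodS, ?_⟩
        intro β hβ
        obtain ⟨heq, hmem⟩ := helem β hβ
        have hc := hS₀col _ hmem
        have := of_decide_eq_false hc
        simp only [Set.mem_compl_iff]
        rwa [heq] at this
  | succ x IH =>
    intro n hn T hT σ hgood P
    classical
    have h0 : (0 : ℕ) < x + 2 := by omega
    have hT0eq : ∀ (h : (0:ℕ) < x + 2) (κ : Fin 0 → List ℕ),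
        T ⟨0, h⟩ κ = T ⟨0, h0⟩ (fun i => i.elim0) :=
      fun h κ => congrArg _ (funext fun i => i.elim0)
    set T0 := T ⟨0, h0⟩ (fun i => i.elim0) with hT0def
    set Pt : List ℕ → Set (Fin (x + 1) → List ℕ) := fun ρ => {γ | consT ρ γ ∈ P} with hPt
    -- tail systems are good
    have hTt_good : ∀ ρ, ρ ∈ T0 →
        SysGoodFrom (fun i => 2 * tpl n i - 1) (tailSys T ρ) (tpl σ) := by
      intro ρ hρ k γ hmem
      have h1 : SysMemUpTo T ⟨(k : ℕ) + 1, Nat.succ_lt_succ k.isLt⟩ (consT ρ γ) := by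
        intro j hj
        rcases j with ⟨(_ | i), hjv⟩
        · show ρ ∈ T ⟨0, hjv⟩ _
          rw [hT0eq hjv _]
          exact hρ
        · have hik : i < (k : ℕ) := by simpa [Fin.lt_def] using hj
          have h2 := hmem ⟨i, lt_trans hik k.isLt⟩ (by simpa [Fin.lt_def])
          rw [show restrictBelow (⟨i + 1, hjv⟩ : Fin (x + 2)) (consT ρ γ)
              = consT ρ (restrictBelow ⟨i, lt_trans hik k.isLt⟩ γ)
            from restrict_consT ρ γ ⟨i, lt_trans hik k.isLt⟩]
          exact h2
      have h2 := hgood ⟨(k : ℕ) + 1, Nat.succ_lt_succ k.isLt⟩ (consT ρ γ) h1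
      rw [restrict_consT ρ γ k] at h2
      exact h2
    have key : ∀ ρ, ρ ∈ T0 → ∃ S' : TreeSystem x,
        (∀ k κ, S' k κ ⊆ tailSys T ρ k κ) ∧
        (SysGoodFromFor (tpl n) S' (tpl σ) (Pt ρ) ∨
          SysGoodFromFor (tpl n) S' (tpl σ) (Pt ρ)ᶜ) := by
      intro ρ hρ
      exact IH (tpl n) (fun i => hn _) (tailSys T ρ) (fun k κ => hT _ _) (tpl σ)
        (hTt_good ρ hρ) (Pt ρ)
    choose S' hS'sub hS'or using key
    set c : List ℕ → Bool := fun ρ =>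
      decide (∃ h : ρ ∈ T0, SysGoodFromFor (tpl n) (S' ρ h) (tpl σ) (Pt ρ)) with hc
    have hg0 : GoodFrom (2 * n ⟨0, h0⟩ - 1) T0 (σ ⟨0, h0⟩) := by
      have hv : SysMemUpTo T ⟨0, h0⟩ (fun _ => []) := by
        intro k hk
        exact absurd hk (by simp [Fin.lt_def])
      have := hgood ⟨0, h0⟩ (fun _ => []) hv
      rwa [hT0eq h0 _] at this
    obtain ⟨S₀, b, hsub₀, hS₀good, hS₀col⟩ :=
      treeColor (T0.sup List.length) (n ⟨0, h0⟩) (hn _) T0 (hT _ _) (σ ⟨0, h0⟩)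
        (fun ρ hρ => le_trans (Finset.le_sup (f := List.length) hρ) (Nat.le_add_right _ _))
        hg0 c
    set SS := buildSys S₀ S' with hSS
    have hSSsucc : ∀ (β : Fin (x + 2) → List ℕ) (hρ : β ⟨0, h0⟩ ∈ T0) (i : ℕ)
        (hi : i + 1 < x + 2),
        SS ⟨i + 1, hi⟩ (restrictBelow ⟨i + 1, hi⟩ β)
          = S' (β ⟨0, h0⟩) hρ ⟨i, Nat.lt_of_succ_lt_succ hi⟩
              (restrictBelow ⟨i, Nat.lt_of_succ_lt_succ hi⟩ (tpl β)) := by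
      intro β hρ i hi
      exact buildSys_succ S₀ S' i hi _ hρ
    have hβcons : ∀ β : Fin (x + 2) → List ℕ, consT (β ⟨0, h0⟩) (tpl β) = β := by
      intro β
      funext s
      rcases s with ⟨(_ | sv), hs⟩ <;> rfl
    have hElem : ∀ β, SysElem SS β → ∃ hm : β ⟨0, h0⟩ ∈ T0,
        β ⟨0, h0⟩ ∈ S₀ ∧ SysElem (S' (β ⟨0, h0⟩) hm) (tpl β) := by
      intro β hβ
      have hβ0 : β ⟨0, h0⟩ ∈ S₀ := hβ ⟨0, h0⟩
      have hρT : β ⟨0, h0⟩ ∈ T0 := hsub₀ hβ0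
      refine ⟨hρT, hβ0, ?_⟩
      intro i
      have h2 := hβ ⟨(i : ℕ) + 1, Nat.succ_lt_succ i.isLt⟩
      rw [hSSsucc β hρT (i : ℕ) (Nat.succ_lt_succ i.isLt)] at h2
      exact h2
    have hgoodS : SysGoodFrom n SS σ := by
      intro k β hmem
      rcases k with ⟨(_ | j), hk⟩
      · exact hS₀good
      · have hβ0 : β ⟨0, h0⟩ ∈ S₀ := hmem ⟨0, h0⟩ (by simp [Fin.lt_def])
        have hρT : β ⟨0, h0⟩ ∈ T0 := hsub₀ hβ0
        have hSF : SysGoodFrom (tpl n) (S' (β ⟨0, h0⟩) hρT) (tpl σ) := by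
          rcases hS'or (β ⟨0, h0⟩) hρT with h | h
          · exact h.1
          · exact h.1
        have hmem' : SysMemUpTo (S' (β ⟨0, h0⟩) hρT) ⟨j, Nat.lt_of_succ_lt_succ hk⟩
            (tpl β) := by
          intro i hi
          have hiv : (i : ℕ) < j := by simpa [Fin.lt_def] using hi
          have h2 := hmem ⟨(i : ℕ) + 1, by omega⟩ (by simp [Fin.lt_def]; omega)
          rw [hSSsucc β hρT (i : ℕ) (by omega)] at h2
          exact h2
        have h3 := hSF ⟨j, Nat.lt_of_succ_lt_succ hk⟩ (tpl β) hmem'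
        rw [hSSsucc β hρT j hk]
        exact h3
    refine ⟨SS, ?_, ?_⟩
    · intro k κ
      rcases k with ⟨(_ | j), hk⟩
      · rw [hT0eq hk κ]
        exact hsub₀
      · by_cases h : κ ⟨0, Nat.succ_pos j⟩ ∈ T0
        · rw [hSS, buildSys_succ S₀ S' j hk κ h]
          have hκ : consT (κ ⟨0, Nat.succ_pos j⟩)
              (fun i => κ ⟨(i : ℕ) + 1, Nat.succ_lt_succ i.isLt⟩) = κ := by
            funext s
            rcases s with ⟨(_ | sv), hs⟩ <;> rfl
          have hs := hS'sub (κ ⟨0, Nat.succ_pos j⟩) h ⟨j, Nat.lt_of_succ_lt_succ hk⟩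
            (fun i => κ ⟨(i : ℕ) + 1, Nat.succ_lt_succ i.isLt⟩)
          rw [show tailSys T (κ ⟨0, Nat.succ_pos j⟩) ⟨j, Nat.lt_of_succ_lt_succ hk⟩
              (fun i => κ ⟨(i : ℕ) + 1, Nat.succ_lt_succ i.isLt⟩)
            = T ⟨j + 1, hk⟩ κ from congrArg _ hκ] at hs
          exact hs
        · rw [hSS, buildSys_succ_neg S₀ S' j hk κ h]
          exact Finset.empty_subset _
    · cases b with
      | true =>
        left
        refine ⟨hgoodS, ?_⟩
        intro β hβ
        obtain ⟨hρT, hβ0, hel⟩ := hElem β hβ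
        have hcb := hS₀col _ hβ0
        obtain ⟨h', hfor⟩ := of_decide_eq_true hcb
        have hmemP : tpl β ∈ Pt (β ⟨0, h0⟩) := hfor.2 (tpl β) hel
        have : consT (β ⟨0, h0⟩) (tpl β) ∈ P := hmemP
        rwa [hβcons β] at this
      | false =>
        right
        refine ⟨hgoodS, ?_⟩
        intro β hβ
        obtain ⟨hρT, hβ0, hel⟩ := hElem β hβ
        have hcb := hS₀col _ hβ0
        have hnot := of_decide_eq_false hcb
        rcases hS'or (β ⟨0, h0⟩) hρT with h | h
        · exact absurd ⟨hρT, h⟩ hnot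
        · have hmemPc : tpl β ∈ (Pt (β ⟨0, h0⟩))ᶜ := h.2 (tpl β) hel
          simp only [Set.mem_compl_iff]
          intro hβP
          apply hmemPc
          show consT (β ⟨0, h0⟩) (tpl β) ∈ P
          rw [hβcons β]
          exact hβP

/-- Given a system `T⃗` that is `(2n_0−1, …, 2n_x−1)`-good from `σ⃗` and a set `P`
of elements of `T⃗`, there is a system all of whose elements are elements of `T⃗`
which is `n⃗`-good from `σ⃗` for `P`, or one which is `n⃗`-good from `σ⃗` for the
complement of `P`. -/
theorem sys_good_subset_or_complement (x : ℕ) (n : Fin (x + 1) → ℕ)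
    (hn : ∀ i, 1 ≤ n i)
    (T : TreeSystem x) (hT : IsTreeSystem T) (σ : Fin (x + 1) → List ℕ)
    (hgood : SysGoodFrom (fun i => 2 * n i - 1) T σ)
    (P : Set (Fin (x + 1) → List ℕ)) (hP : ∀ β ∈ P, SysElem T β) :
    ∃ S : TreeSystem x, IsTreeSystem S ∧ (∀ β, SysElem S β → SysElem T β) ∧
      (SysGoodFromFor n S σ P ∨ SysGoodFromFor n S σ Pᶜ) := by
  obtain ⟨S, hsub, hor⟩ := auxMain x n hn T hT σ hgood P
  refine ⟨S, ?_, ?_, hor⟩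
  · intro k κ ρ1 h1 ρ2 h2 hpre
    exact hT k κ ρ1 (hsub k κ h1) ρ2 (hsub k κ h2) hpre
  · intro β hβ k
    exact hsub _ _ (hβ k)
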